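/- Let the state space be E = ℝ with x ↦ D_n(x) decreasing and compact-valued. Suppose there exist upper semicontinuous functions ϑ_{n,1}, ϑ_{n,2} : D_n → ℝ_+ and measurable functions Θ_{n,1}, Θ_{n,2} : Z → ℝ_+ with Θ_{n,1}(Z_{n+1}), Θ_{n,2}(Z_{n+1}) ∈ L^p(Ω_{n+1},A_{n+1},P_{n+1}) such that |c_n(x,a,T_n(x,a,z))| ≤ ϑ_{n,1}(x,a) + Θ_{n,1}(z) and b(T_n(x,a,z)) ≤ ϑ_{n,2}(x,a) + Θ_{n,2}(z) for every (x,a,z) ∈ D_n × Z. Then the local L^p domination condition holds: for every (x̄,ā) ∈ D_n and every ε > 0 there exist measurable Θ_{n,1}^{x̄,ā}, Θ_{n,2}^{x̄,ā} : Z → ℝ_+ with Θ_{n,i}^{x̄,ā}(Z_{n+1}) ∈ L^p(P_{n+1}) such that |c_n(x,a,T_n(x,a,z))| ≤ Θ_{n,1}^{x̄,ā}(z) and b(T_n(x,a,z)) ≤ Θ_{n,2}^{x̄,ā}(z) for all z ∈ Z and all (x,a) ∈ B_ε(x̄,ā) ∩ D_n. -/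

import Mathlib

open MeasureTheory
open scoped ENNReal

lemma usc_bddAbove_on_compact {X : Type*} [TopologicalSpace X] {f : X → ℝ}
    (hf : UpperSemicontinuous f) {K : Set X} (hK : IsCompact K) :
    ∃ M : ℝ, ∀ x ∈ K, f x ≤ M := by
  obtain ⟨t, _, ht⟩ := hK.elim_nhds_subcover (fun y => {x | f x < f y + 1})
    (fun y _ => (hf y (f y + 1) (by linarith)))
  obtain ⟨M, hM⟩ := (t.image (fun y => f y + 1)).exists_le
  refine ⟨M, fun x hx => ?_⟩
  obtain ⟨y, hyt, hxy⟩ := Set.mem_iUnion₂.1 (ht hx)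
  exact le_trans (le_of_lt hxy) (hM _ (Finset.mem_image_of_mem _ hyt))

/-- Let the state space be `E = ℝ` with `x ↦ D_n(x)` decreasing and
compact-valued. Suppose there exist upper semicontinuous functions `ϑ₁, ϑ₂ : D_n → ℝ₊` and
measurable functions `Θ₁, Θ₂ : Z → ℝ₊` with `Θ₁(Z_{n+1}), Θ₂(Z_{n+1}) ∈ L^p(Ω,𝒜,P)` such that
`|c_n(x,a,T_n(x,a,z))| ≤ ϑ₁(x,a) + Θ₁(z)` and `b(T_n(x,a,z)) ≤ ϑ₂(x,a) + Θ₂(z)` for all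
`(x,a,z) ∈ D_n × Z`. Then the local `L^p` domination condition holds: for every
`(x̄,ā) ∈ D_n` and every `ε > 0` there exist measurable `Θ₁', Θ₂' : Z → ℝ₊` with
`Θᵢ'(Z_{n+1}) ∈ L^p(P)` dominating `|c_n(x,a,T_n(x,a,·))|` and `b(T_n(x,a,·))` uniformly on
`B_ε(x̄,ā) ∩ D_n`. -/
theorem robust_separation_implies_local_Lp_domination
    {A Z : Type*} [MetricSpace A] [MeasurableSpace Z]
    (P : Measure Z) [IsProbabilityMeasure P] (p : ℝ≥0∞) [Fact (1 ≤ p)]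
    (D : Set (ℝ × A))
    (hDdec : ∀ x x' : ℝ, x ≤ x' → {a : A | (x', a) ∈ D} ⊆ {a : A | (x, a) ∈ D})
    (hDcomp : ∀ x : ℝ, IsCompact {a : A | (x, a) ∈ D})
    (T : ℝ → A → Z → ℝ) (c : ℝ → A → ℝ → ℝ) (b : ℝ → ℝ) (hb : ∀ x, 1 ≤ b x)
    (ϑ₁ ϑ₂ : ℝ × A → ℝ)
    (hϑ₁usc : UpperSemicontinuous ϑ₁) (hϑ₂usc : UpperSemicontinuous ϑ₂)
    (hϑ₁pos : ∀ xa, 0 ≤ ϑ₁ xa) (hϑ₂pos : ∀ xa, 0 ≤ ϑ₂ xa)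
    (Θ₁ Θ₂ : Z → ℝ)
    (hΘ₁m : Measurable Θ₁) (hΘ₂m : Measurable Θ₂)
    (hΘ₁pos : ∀ z, 0 ≤ Θ₁ z) (hΘ₂pos : ∀ z, 0 ≤ Θ₂ z)
    (hΘ₁Lp : MemLp Θ₁ p P) (hΘ₂Lp : MemLp Θ₂ p P)
    (hdom₁ : ∀ x a, (x, a) ∈ D → ∀ z, |c x a (T x a z)| ≤ ϑ₁ (x, a) + Θ₁ z)
    (hdom₂ : ∀ x a, (x, a) ∈ D → ∀ z, b (T x a z) ≤ ϑ₂ (x, a) + Θ₂ z) :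
    ∀ xa : ℝ × A, xa ∈ D → ∀ ε : ℝ, 0 < ε →
      ∃ Θ₁' Θ₂' : Z → ℝ,
        Measurable Θ₁' ∧ Measurable Θ₂' ∧ (∀ z, 0 ≤ Θ₁' z) ∧ (∀ z, 0 ≤ Θ₂' z) ∧
        MemLp Θ₁' p P ∧ MemLp Θ₂' p P ∧
        ∀ x a, (x, a) ∈ D → (x, a) ∈ Metric.closedBall xa ε → ∀ z,
          |c x a (T x a z)| ≤ Θ₁' z ∧ b (T x a z) ≤ Θ₂' z := by
  rintro ⟨xb, ab⟩ hxa ε hε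
  set K : Set (ℝ × A) := Set.Icc (xb - ε) (xb + ε) ×ˢ {a : A | (xb - ε, a) ∈ D} with hK
  have hKcomp : IsCompact K := isCompact_Icc.prod (hDcomp _)
  obtain ⟨M₁, hM₁⟩ := usc_bddAbove_on_compact hϑ₁usc hKcomp
  obtain ⟨M₂, hM₂⟩ := usc_bddAbove_on_compact hϑ₂usc hKcomp
  refine ⟨fun z => max M₁ 0 + Θ₁ z, fun z => max M₂ 0 + Θ₂ z,
    (measurable_const.add hΘ₁m), (measurable_const.add hΘ₂m),
    fun z => add_nonneg (le_max_right _ _) (hΘ₁pos z),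
    fun z => add_nonneg (le_max_right _ _) (hΘ₂pos z),
    (memLp_const (max M₁ 0)).add hΘ₁Lp, (memLp_const (max M₂ 0)).add hΘ₂Lp, ?_⟩
  intro x a hD hball z
  have hdist : dist x xb ≤ ε :=
    le_trans (le_max_left _ _) (Metric.mem_closedBall.1 hball)
  have hxI : x ∈ Set.Icc (xb - ε) (xb + ε) := by
    rw [Real.dist_eq, abs_le] at hdist
    constructor <;> linarith [hdist.1, hdist.2]
  have hmemK : (x, a) ∈ K :=
    ⟨hxI, hDdec (xb - ε) x hxI.1 hD⟩
  constructor
  · calc |c x a (T x a z)| ≤ ϑ₁ (x, a) + Θ₁ z := hdom₁ x a hD z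
    _ ≤ max M₁ 0 + Θ₁ z := by
        have := hM₁ _ hmemK
        have := le_max_left M₁ 0
        linarith
  · calc b (T x a z) ≤ ϑ₂ (x, a) + Θ₂ z := hdom₂ x a hD z
    _ ≤ max M₂ 0 + Θ₂ z := by
        have := hM₂ _ hmemK
        have := le_max_left M₂ 0
        linarith
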